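/- Fix c₁, c₂ ∈ ℂ with c₂ ≠ 0. Let g, v, G, V ∈ C∞₂π(ℝ²,ℂ) satisfy G_x = g_y, V_x = v_y and ∫₀^{2π} G(x,y) dx = ∫₀^{2π} V(x,y) dx = 0 for every y. Then: (i) for all a, b, A, B ∈ C∞₂π(ℝ²,ℂ) with A_x = a_y, B_x = b_y, ∫₀^{2π} A dx = ∫₀^{2π} B dx = 0, one has d/dε|_{ε=0} ∫₀^{2π}∫₀^{2π} (g+εa)·( (V+εB) − (1/2)·(G+εA) + (c₁/(2c₂))·(g+εa)_{xx} ) dx dy = ∫₀^{2π}∫₀^{2π} [ b·G + a·( V − G + (c₁/c₂)·g_{xx} ) ] dx dy, i.e. the variational gradient of H(g,v) = ∫∫ g·( ∂_x^{−1}v_y − (1/2)·∂_x^{−1}g_y + (c₁/(2c₂))·g_{xx} ) dx dy is (δH/δv, δH/δg) = ( G , V − G + (c₁/c₂)·g_{xx} ); (ii) the corresponding Euler vector field is âd*_{(G, V−G+(c₁/c₂)g_{xx})}(g,v) = ( G·g_x − g_y·g + c₂·G_y , 2·v·g_y − v_y·g + v_x·G − 2·g_x·V + g_y·g + 2·g_x·G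 − (c₁/c₂)·( g·g_{xxx} + 2·g_x·g_{xx} ) + 2·c₁·g_{xxy} + c₂·(V_y − G_y) ). In particular the first equation of this Euler system is the integrable equation g_t = g_x·∂_x^{−1}g_y − g_y·g + c₂·∂_x^{−1}g_{yy} (equation (6) of the paper, a dispersionless BKP-type equation). -/

import Mathlib

open Real intervalIntegral
open scoped ContDiff

noncomputable section

/-- Functions on `ℝ²` (representing functions on the 2-torus `S¹ × S¹`). -/
abbrev F2 : Type := ℝ × ℝ → ℂ

/-- `C∞₂π(ℝ²,ℂ)`: smooth functions `ℝ² → ℂ` which are `2π`-periodic in each variable. -/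
def SmoothPer2 (f : F2) : Prop :=
  ContDiff ℝ ∞ f ∧ (∀ p : ℝ × ℝ, f (p.1 + 2 * π, p.2) = f p)
    ∧ (∀ p : ℝ × ℝ, f (p.1, p.2 + 2 * π) = f p)

/-- Partial derivative in the first variable `x`. -/
def pdx (f : F2) : F2 := fun p => deriv (fun t => f (t, p.2)) p.1

/-- Partial derivative in the second variable `y`. -/
def pdy (f : F2) : F2 := fun p => deriv (fun t => f (p.1, t)) p.2

/-- Double integral `∫₀^{2π}∫₀^{2π} f dx dy` over the torus. -/
def integ2 (f : F2) : ℂ := ∫ y in (0:ℝ)..(2 * π), ∫ x in (0:ℝ)..(2 * π), f (x, y)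

/-- Membership in the looped cotangent Virasoro algebra `g̃`: a pair `(f,u)` of
functions in `C∞₂π(ℝ²,ℂ)`, `f` representing the loop of vector fields `f(x,y)·∂/∂x`
and `u` the loop of quadratic differentials `u(x,y)·dx²`. -/
def MemG (a : F2 × F2) : Prop := SmoothPer2 a.1 ∧ SmoothPer2 a.2

/-- The Lie bracket of the looped cotangent Virasoro algebra `g̃ = L(Vect(S¹) ⋉ F₂)`:
`[(f,u),(g,v)] = (f·g_x − f_x·g, f·v_x + 2·f_x·v − g·u_x − 2·g_x·u)`. -/
def gBracket (a b : F2 × F2) : F2 × F2 :=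
  (fun p => a.1 p * pdx b.1 p - pdx a.1 p * b.1 p,
   fun p => a.1 p * pdx b.2 p + 2 * pdx a.1 p * b.2 p
     - b.1 p * pdx a.2 p - 2 * pdx b.1 p * a.2 p)

/-- The coadjoint action of the centrally extended algebra `ĝ` with central charges
`(c₁,c₂)`: `âd*_{(f,u)}(g,v) = (f·g_x − f_x·g + c₂·f_y,
f·v_x + 2·f_x·v − u_x·g − 2·u·g_x + c₁·f_{xxx} + c₂·u_y)`. -/
def hatAd (c₁ c₂ : ℂ) (f u g v : F2) : F2 × F2 :=
  (fun p => f p * pdx g p - pdx f p * g p + c₂ * pdy f p,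
   fun p => f p * pdx v p + 2 * pdx f p * v p - pdx u p * g p - 2 * u p * pdx g p
     + c₁ * pdx (pdx (pdx f)) p + c₂ * pdy u p)

namespace BKP

lemma hasDerivAt_slice_x {f : F2} (hf : ContDiff ℝ ∞ f) (p : ℝ × ℝ) :
    HasDerivAt (fun t => f (t, p.2)) (fderiv ℝ f p (1, 0)) p.1 := by
  have h1 : HasDerivAt (fun t : ℝ => (t, p.2)) ((1:ℝ), (0:ℝ)) p.1 :=
    (hasDerivAt_id p.1).prodMk (hasDerivAt_const p.1 p.2)
  have h2 : HasFDerivAt f (fderiv ℝ f p) p :=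
    (hf.differentiable (by norm_num) p).hasFDerivAt
  exact (h2.comp_hasDerivAt p.1 h1 : _)

lemma hasDerivAt_slice_y {f : F2} (hf : ContDiff ℝ ∞ f) (p : ℝ × ℝ) :
    HasDerivAt (fun t => f (p.1, t)) (fderiv ℝ f p (0, 1)) p.2 := by
  have h1 : HasDerivAt (fun t : ℝ => (p.1, t)) ((0:ℝ), (1:ℝ)) p.2 :=
    (hasDerivAt_const p.2 p.1).prodMk (hasDerivAt_id p.2)
  have h2 : HasFDerivAt f (fderiv ℝ f p) p :=
    (hf.differentiable (by norm_num) p).hasFDerivAt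
  exact (h2.comp_hasDerivAt p.2 h1 : _)

lemma pdx_eq_fderiv {f : F2} (hf : ContDiff ℝ ∞ f) (p : ℝ × ℝ) :
    pdx f p = fderiv ℝ f p (1, 0) := (hasDerivAt_slice_x hf p).deriv

lemma pdy_eq_fderiv {f : F2} (hf : ContDiff ℝ ∞ f) (p : ℝ × ℝ) :
    pdy f p = fderiv ℝ f p (0, 1) := (hasDerivAt_slice_y hf p).deriv

lemma hasDerivAt_pdx {f : F2} (hf : ContDiff ℝ ∞ f) (p : ℝ × ℝ) :
    HasDerivAt (fun t => f (t, p.2)) (pdx f p) p.1 := by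
  rw [pdx_eq_fderiv hf]; exact hasDerivAt_slice_x hf p

lemma hasDerivAt_pdy {f : F2} (hf : ContDiff ℝ ∞ f) (p : ℝ × ℝ) :
    HasDerivAt (fun t => f (p.1, t)) (pdy f p) p.2 := by
  rw [pdy_eq_fderiv hf]; exact hasDerivAt_slice_y hf p

lemma contDiff_pdx {f : F2} (hf : ContDiff ℝ ∞ f) : ContDiff ℝ ∞ (pdx f) := by
  have h : pdx f = fun p => fderiv ℝ f p (1, 0) := funext fun p => pdx_eq_fderiv hf p
  rw [h]
  exact (ContinuousLinearMap.apply ℝ ℂ ((1:ℝ), (0:ℝ))).contDiff.comp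
    (hf.fderiv_right (by norm_num))

lemma contDiff_pdy {f : F2} (hf : ContDiff ℝ ∞ f) : ContDiff ℝ ∞ (pdy f) := by
  have h : pdy f = fun p => fderiv ℝ f p (0, 1) := funext fun p => pdy_eq_fderiv hf p
  rw [h]
  exact (ContinuousLinearMap.apply ℝ ℂ ((0:ℝ), (1:ℝ))).contDiff.comp
    (hf.fderiv_right (by norm_num))

lemma pdx_pdy_comm {f : F2} (hf : ContDiff ℝ ∞ f) (p : ℝ × ℝ) :
    pdx (pdy f) p = pdy (pdx f) p := by
  have hd : DifferentiableAt ℝ (fderiv ℝ f) p :=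
    ((hf.fderiv_right (m := ∞) (by norm_num)).differentiable (by norm_num)) p
  have hx : HasFDerivAt (fun q => fderiv ℝ f q (1, 0))
      ((ContinuousLinearMap.apply ℝ ℂ ((1:ℝ), (0:ℝ))).comp (fderiv ℝ (fderiv ℝ f) p)) p :=
    (ContinuousLinearMap.apply ℝ ℂ ((1:ℝ), (0:ℝ))).hasFDerivAt.comp p hd.hasFDerivAt
  have hy : HasFDerivAt (fun q => fderiv ℝ f q (0, 1))
      ((ContinuousLinearMap.apply ℝ ℂ ((0:ℝ), (1:ℝ))).comp (fderiv ℝ (fderiv ℝ f) p)) p :=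
    (ContinuousLinearMap.apply ℝ ℂ ((0:ℝ), (1:ℝ))).hasFDerivAt.comp p hd.hasFDerivAt
  have e1 : pdx f = fun q => fderiv ℝ f q (1, 0) := funext fun q => pdx_eq_fderiv hf q
  have e2 : pdy f = fun q => fderiv ℝ f q (0, 1) := funext fun q => pdy_eq_fderiv hf q
  have symm : IsSymmSndFDerivAt ℝ f p := hf.contDiffAt.isSymmSndFDerivAt (by
    rw [minSmoothness_of_isRCLikeNormedField]
    exact WithTop.coe_le_coe.2 le_top)
  calc pdx (pdy f) p = fderiv ℝ (pdy f) p (1, 0) := pdx_eq_fderiv (contDiff_pdy hf) p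
    _ = fderiv ℝ (fderiv ℝ f) p (1, 0) (0, 1) := by rw [e2, hy.fderiv]; rfl
    _ = fderiv ℝ (fderiv ℝ f) p (0, 1) (1, 0) := symm _ _
    _ = fderiv ℝ (pdx f) p (0, 1) := by rw [e1, hx.fderiv]; rfl
    _ = pdy (pdx f) p := (pdy_eq_fderiv (contDiff_pdx hf) p).symm

lemma cont_slice_x {f : F2} (hf : Continuous f) (y : ℝ) :
    Continuous fun x => f (x, y) := hf.comp (continuous_id.prodMk continuous_const)

lemma cont_slice_y {f : F2} (hf : Continuous f) (x : ℝ) :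
    Continuous fun y => f (x, y) := hf.comp (continuous_const.prodMk continuous_id)

lemma per_x {f : F2} (hper : ∀ p : ℝ × ℝ, f (p.1 + 2 * π, p.2) = f p) (y : ℝ) :
    f (2 * π, y) = f (0, y) := by
  have := hper (0, y); simpa using this

lemma per_y {f : F2} (hper : ∀ p : ℝ × ℝ, f (p.1, p.2 + 2 * π) = f p) (x : ℝ) :
    f (x, 2 * π) = f (x, 0) := by
  have := hper (x, 0); simpa using this

lemma pdx_per_x {f : F2} (hper : ∀ p : ℝ × ℝ, f (p.1 + 2 * π, p.2) = f p) (y : ℝ) :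
    pdx f (2 * π, y) = pdx f (0, y) := by
  have h : (fun t => f (t + 2 * π, y)) = fun t => f (t, y) := funext fun t => hper (t, y)
  show deriv (fun t => f (t, y)) (2 * π) = deriv (fun t => f (t, y)) 0
  rw [show (2 * π : ℝ) = 0 + 2 * π by ring, ← deriv_comp_add_const (fun t => f (t, y)) (2 * π), h]

end BKP

namespace BKP

open MeasureTheory

lemma fub_le {f : ℝ → ℝ → ℂ} (hf : Continuous (Function.uncurry f)) {a b c d : ℝ}
    (hab : a ≤ b) (hcd : c ≤ d) :
    (∫ y in a..b, ∫ x in c..d, f x y) = ∫ x in c..d, ∫ y in a..b, f x y := by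
  rw [intervalIntegral.integral_of_le hab, intervalIntegral.integral_of_le hcd]
  simp_rw [intervalIntegral.integral_of_le hab, intervalIntegral.integral_of_le hcd]
  have hint : Integrable (Function.uncurry fun y x => f x y)
      ((volume.restrict (Set.Ioc a b)).prod (volume.restrict (Set.Ioc c d))) := by
    rw [Measure.prod_restrict]
    have hc : Continuous fun p : ℝ × ℝ => f p.2 p.1 := hf.comp continuous_swap
    have h2 : IntegrableOn (fun p : ℝ × ℝ => f p.2 p.1) (Set.Icc a b ×ˢ Set.Icc c d) volume :=
      hc.continuousOn.integrableOn_compact (isCompact_Icc.prod isCompact_Icc)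
    exact h2.mono_set (Set.prod_mono Set.Ioc_subset_Icc_self Set.Ioc_subset_Icc_self)
  exact MeasureTheory.integral_integral_swap hint

lemma fub {f : ℝ → ℝ → ℂ} (hf : Continuous (Function.uncurry f)) (a b c d : ℝ) :
    (∫ y in a..b, ∫ x in c..d, f x y) = ∫ x in c..d, ∫ y in a..b, f x y := by
  rcases le_total a b with hab | hab <;> rcases le_total c d with hcd | hcd
  · exact fub_le hf hab hcd
  · calc (∫ y in a..b, ∫ x in c..d, f x y)
        = ∫ y in a..b, -∫ x in d..c, f x y := by
          simp_rw [intervalIntegral.integral_symm d c]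
      _ = -∫ y in a..b, ∫ x in d..c, f x y := intervalIntegral.integral_neg
      _ = -∫ x in d..c, ∫ y in a..b, f x y := by rw [fub_le hf hab hcd]
      _ = ∫ x in c..d, ∫ y in a..b, f x y := (intervalIntegral.integral_symm d c).symm
  · calc (∫ y in a..b, ∫ x in c..d, f x y)
        = -∫ y in b..a, ∫ x in c..d, f x y := intervalIntegral.integral_symm b a
      _ = -∫ x in c..d, ∫ y in b..a, f x y := by rw [fub_le hf hab hcd]
      _ = ∫ x in c..d, -∫ y in b..a, f x y := intervalIntegral.integral_neg.symm
      _ = ∫ x in c..d, ∫ y in a..b, f x y := by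
          simp_rw [← intervalIntegral.integral_symm b a]
  · calc (∫ y in a..b, ∫ x in c..d, f x y)
        = -∫ y in b..a, ∫ x in c..d, f x y := intervalIntegral.integral_symm b a
      _ = -∫ y in b..a, -∫ x in d..c, f x y := by
          simp_rw [intervalIntegral.integral_symm d c]
      _ = ∫ y in b..a, ∫ x in d..c, f x y := by rw [intervalIntegral.integral_neg]; simp
      _ = ∫ x in d..c, ∫ y in b..a, f x y := fub_le hf hab hcd
      _ = -∫ x in d..c, -∫ y in b..a, f x y := by rw [intervalIntegral.integral_neg]; simp
      _ = -∫ x in d..c, ∫ y in a..b, f x y := by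
          simp_rw [← intervalIntegral.integral_symm b a]
      _ = ∫ x in c..d, ∫ y in a..b, f x y := (intervalIntegral.integral_symm d c).symm

lemma cont_inner {f : F2} (hf : Continuous f) :
    Continuous fun y => ∫ x in (0:ℝ)..(2 * π), f (x, y) := by
  have h : Continuous (Function.uncurry fun (y x : ℝ) => f (x, y)) := hf.comp continuous_swap
  exact intervalIntegral.continuous_parametric_intervalIntegral_of_continuous' h 0 (2 * π)

lemma integ2_add {f g : F2} (hf : Continuous f) (hg : Continuous g) :
    integ2 (fun p => f p + g p) = integ2 f + integ2 g := by
  unfold integ2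
  have h1 : ∀ y : ℝ, (∫ x in (0:ℝ)..(2 * π), (f (x, y) + g (x, y)))
      = (∫ x in (0:ℝ)..(2 * π), f (x, y)) + ∫ x in (0:ℝ)..(2 * π), g (x, y) := fun y =>
    intervalIntegral.integral_add ((cont_slice_x hf y).intervalIntegrable 0 (2 * π))
      ((cont_slice_x hg y).intervalIntegrable 0 (2 * π))
  simp_rw [h1]
  exact intervalIntegral.integral_add ((cont_inner hf).intervalIntegrable 0 (2 * π))
    ((cont_inner hg).intervalIntegrable 0 (2 * π))

lemma integ2_sub {f g : F2} (hf : Continuous f) (hg : Continuous g) :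
    integ2 (fun p => f p - g p) = integ2 f - integ2 g := by
  unfold integ2
  have h1 : ∀ y : ℝ, (∫ x in (0:ℝ)..(2 * π), (f (x, y) - g (x, y)))
      = (∫ x in (0:ℝ)..(2 * π), f (x, y)) - ∫ x in (0:ℝ)..(2 * π), g (x, y) := fun y =>
    intervalIntegral.integral_sub ((cont_slice_x hf y).intervalIntegrable 0 (2 * π))
      ((cont_slice_x hg y).intervalIntegrable 0 (2 * π))
  simp_rw [h1]
  exact intervalIntegral.integral_sub ((cont_inner hf).intervalIntegrable 0 (2 * π))
    ((cont_inner hg).intervalIntegrable 0 (2 * π))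

lemma integ2_const_mul (c : ℂ) (f : F2) :
    integ2 (fun p => c * f p) = c * integ2 f := by
  unfold integ2
  simp_rw [intervalIntegral.integral_const_mul]

lemma integ2_congr {f g : F2} (h : ∀ p, f p = g p) : integ2 f = integ2 g := by
  unfold integ2; simp_rw [h]

lemma parts {u v u' v' : ℝ → ℂ} (hu : ∀ x, HasDerivAt u (u' x) x)
    (hv : ∀ x, HasDerivAt v (v' x) x)
    (hu' : Continuous u') (hv' : Continuous v') {a b : ℝ}
    (hb : u b * v b = u a * v a) :
    ∫ x in a..b, u x * v' x = - ∫ x in a..b, u' x * v x := by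
  have hcu : Continuous u := (Differentiable.continuous fun x => (hu x).differentiableAt)
  have hcv : Continuous v := (Differentiable.continuous fun x => (hv x).differentiableAt)
  have h := intervalIntegral.integral_deriv_mul_eq_sub (fun x _ => hu x) (fun x _ => hv x)
    (hu'.intervalIntegrable a b) (hv'.intervalIntegrable a b)
  have hsplit : (∫ x in a..b, (u' x * v x + u x * v' x))
      = (∫ x in a..b, u' x * v x) + ∫ x in a..b, u x * v' x :=
    intervalIntegral.integral_add ((hu'.mul hcv).intervalIntegrable a b)
      ((hcu.mul hv').intervalIntegrable a b)
  rw [hsplit, hb] at h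
  have h0 : (∫ x in a..b, u' x * v x) + ∫ x in a..b, u x * v' x = 0 := by rw [h]; ring
  linear_combination h0

lemma prim {h : ℝ → ℂ} (hc : Continuous h) (y : ℝ) :
    HasDerivAt (fun s => ∫ t in (0:ℝ)..s, h t) (h y) y :=
  intervalIntegral.integral_hasDerivAt_right (hc.intervalIntegrable 0 y)
    hc.aestronglyMeasurable.stronglyMeasurableAtFilter hc.continuousAt

lemma ftc {f f' : ℝ → ℂ} (h : ∀ x, HasDerivAt f (f' x) x) (hc : Continuous f') (a b : ℝ) :
    ∫ x in a..b, f' x = f b - f a :=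
  intervalIntegral.integral_eq_sub_of_hasDerivAt (fun x _ => h x) (hc.intervalIntegrable a b)

end BKP

namespace BKP

open MeasureTheory

lemma swap_key {b B g G : F2} (hb : SmoothPer2 b) (hB : SmoothPer2 B)
    (hg : SmoothPer2 g) (hG : SmoothPer2 G)
    (hGx : ∀ p, pdx G p = pdy g p) (hBx : ∀ p, pdx B p = pdy b p)
    (hG0 : ∀ y : ℝ, (∫ x in (0:ℝ)..(2 * π), G (x, y)) = 0)
    (hB0 : ∀ y : ℝ, (∫ x in (0:ℝ)..(2 * π), B (x, y)) = 0) :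
    integ2 (fun p => g p * B p) = integ2 (fun p => b p * G p) := by
  have cb := hb.1.continuous
  have cB := hB.1.continuous
  have cg := hg.1.continuous
  have cG := hG.1.continuous
  have cpdyg := (contDiff_pdy hg.1).continuous
  have cpdxG := (contDiff_pdx hG.1).continuous
  have cpdxB := (contDiff_pdx hB.1).continuous
  have cpdyb := (contDiff_pdy hb.1).continuous
  set c : ℂ := (∫ s in (0:ℝ)..(2 * π), b (s, 0)) / ((2 * π : ℝ) : ℂ) with hc
  set χ : F2 := fun p => (∫ s in (0:ℝ)..p.1, b (s, 0)) - c * p.1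
      + ∫ t in (0:ℝ)..p.2, B (p.1, t) with hχ
  -- rectangle identity
  have F0 : ∀ X Y : ℝ, (∫ t in (0:ℝ)..Y, B (X, t)) - (∫ t in (0:ℝ)..Y, B (0, t))
      = ∫ s in (0:ℝ)..X, (b (s, Y) - b (s, 0)) := by
    intro X Y
    have h1 : ∀ t : ℝ, B (X, t) - B (0, t) = ∫ s in (0:ℝ)..X, pdy b (s, t) := by
      intro t
      have hftc := ftc (f := fun s => B (s, t)) (f' := fun s => pdx B (s, t))
        (fun s => hasDerivAt_pdx hB.1 (s, t)) (cont_slice_x cpdxB t) 0 X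
      rw [← hftc]
      exact intervalIntegral.integral_congr (fun s _ => hBx (s, t))
    have h3 : (∫ t in (0:ℝ)..Y, ∫ s in (0:ℝ)..X, pdy b (s, t))
        = ∫ s in (0:ℝ)..X, ∫ t in (0:ℝ)..Y, pdy b (s, t) :=
      fub (f := fun s t => pdy b (s, t)) cpdyb 0 Y 0 X
    have h4 : ∀ s : ℝ, (∫ t in (0:ℝ)..Y, pdy b (s, t)) = b (s, Y) - b (s, 0) :=
      fun s => ftc (f := fun t => b (s, t)) (f' := fun t => pdy b (s, t))
        (fun t => hasDerivAt_pdy hb.1 (s, t)) (cont_slice_y cpdyb s) 0 Y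
    calc (∫ t in (0:ℝ)..Y, B (X, t)) - (∫ t in (0:ℝ)..Y, B (0, t))
        = ∫ t in (0:ℝ)..Y, (B (X, t) - B (0, t)) :=
          (intervalIntegral.integral_sub ((cont_slice_y cB X).intervalIntegrable 0 Y)
            ((cont_slice_y cB 0).intervalIntegrable 0 Y)).symm
      _ = ∫ t in (0:ℝ)..Y, ∫ s in (0:ℝ)..X, pdy b (s, t) := by simp_rw [h1]
      _ = ∫ s in (0:ℝ)..X, ∫ t in (0:ℝ)..Y, pdy b (s, t) := h3
      _ = ∫ s in (0:ℝ)..X, (b (s, Y) - b (s, 0)) := by simp_rw [h4]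
  -- ∫₀^{2π} B (x,t) dt = 0 for all x
  have F4 : ∀ x : ℝ, (∫ t in (0:ℝ)..(2 * π), B (x, t)) = 0 := by
    have hM : ∀ x : ℝ, (∫ t in (0:ℝ)..(2 * π), B (x, t))
        = ∫ t in (0:ℝ)..(2 * π), B (0, t) := by
      intro x
      have h := F0 x (2 * π)
      have hb0 : ∀ s : ℝ, b (s, 2 * π) - b (s, 0) = 0 := fun s => by
        rw [per_y hb.2.2 s]; ring
      have h2 : (∫ s in (0:ℝ)..x, (b (s, 2 * π) - b (s, 0))) = 0 := by
        simp_rw [hb0]; simp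
      rw [h2] at h
      linear_combination h
    have hsum : (∫ x in (0:ℝ)..(2 * π), (∫ t in (0:ℝ)..(2 * π), B (x, t))) = 0 := by
      rw [(fub (f := fun x t => B (x, t)) cB 0 (2 * π) 0 (2 * π)).symm]
      simp_rw [hB0]
      simp
    have hM0 : (∫ t in (0:ℝ)..(2 * π), B (0, t)) = 0 := by
      have h2 : (∫ x in (0:ℝ)..(2 * π), (∫ t in (0:ℝ)..(2 * π), B (x, t)))
          = (2 * π - 0 : ℝ) • ∫ t in (0:ℝ)..(2 * π), B (0, t) := by
        simp_rw [hM]; exact intervalIntegral.integral_const _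
      rw [hsum] at h2
      have h3 := h2.symm
      rw [smul_eq_zero] at h3
      rcases h3 with h | h
      · exfalso; have := Real.two_pi_pos; linarith
      · exact h
    intro x; rw [hM x]; exact hM0
  -- χ_y = B
  have F1 : ∀ p : ℝ × ℝ, HasDerivAt (fun t => χ (p.1, t)) (B p) p.2 := by
    intro p
    exact (prim (h := fun t => B (p.1, t)) (cont_slice_y cB p.1) p.2).const_add
      ((∫ s in (0:ℝ)..p.1, b (s, 0)) - c * p.1)
  -- χ_x = b - c
  have F2 : ∀ p : ℝ × ℝ, HasDerivAt (fun x => χ (x, p.2)) (b p - c) p.1 := by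
    rintro ⟨x, y⟩
    have hrw : (fun x => χ (x, y)) = fun x => (((∫ s in (0:ℝ)..x, b (s, 0)) - c * x
        + (∫ t in (0:ℝ)..y, B (0, t))) + ∫ s in (0:ℝ)..x, (b (s, y) - b (s, 0))) := by
      funext x
      simp only [hχ]
      linear_combination (F0 x y)
    rw [hrw]
    have h1 : HasDerivAt (fun x : ℝ => ∫ s in (0:ℝ)..x, b (s, 0)) (b (x, 0)) x :=
      prim (cont_slice_x cb 0) x
    have h2 : HasDerivAt (fun x : ℝ => c * (x : ℂ)) c x := by
      have := (Complex.ofRealCLM.hasDerivAt (x := x)).const_mul c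
      simpa using this
    have h3 : HasDerivAt (fun x : ℝ => ∫ s in (0:ℝ)..x, (b (s, y) - b (s, 0)))
        (b (x, y) - b (x, 0)) x :=
      prim ((cont_slice_x cb y).sub (cont_slice_x cb 0)) x
    have h := (((h1.fun_sub h2).add_const (∫ t in (0:ℝ)..y, B (0, t))).fun_add h3)
    convert h using 1
    · rfl
    · ring
  -- χ continuous
  have cχ : Continuous χ := by
    rw [hχ]
    apply Continuous.add
    · apply Continuous.sub
      · exact intervalIntegral.continuous_parametric_intervalIntegral_of_continuous
          (f := fun (p : ℝ × ℝ) s => b (s, 0)) (μ := volume)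
          (cb.comp (continuous_snd.prodMk continuous_const)) continuous_fst
      · exact continuous_const.mul (Complex.continuous_ofReal.comp continuous_fst)
    · exact intervalIntegral.continuous_parametric_intervalIntegral_of_continuous
        (f := fun (p : ℝ × ℝ) t => B (p.1, t)) (μ := volume)
        (cB.comp ((continuous_fst.comp continuous_fst).prodMk continuous_snd)) continuous_snd
  -- χ periodic in x at endpoints
  have F5 : ∀ y : ℝ, χ (2 * π, y) = χ (0, y) := by
    intro y
    have h1 : (∫ t in (0:ℝ)..y, B (2 * π, t)) = ∫ t in (0:ℝ)..y, B (0, t) :=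
      intervalIntegral.integral_congr fun t _ => per_x hB.2.1 t
    have h2 : c * ((2 * π : ℝ) : ℂ) = ∫ s in (0:ℝ)..(2 * π), b (s, 0) := by
      have hne : ((2 * π : ℝ) : ℂ) ≠ 0 := Complex.ofReal_ne_zero.2 Real.two_pi_pos.ne'
      rw [hc]
      exact div_mul_cancel₀ _ hne
    simp only [hχ]
    rw [h1]
    simp only [intervalIntegral.integral_same, Complex.ofReal_zero, mul_zero]
    linear_combination -h2
  -- χ periodic in y at endpoints
  have F6 : ∀ x : ℝ, χ (x, 2 * π) = χ (x, 0) := by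
    intro x
    simp only [hχ]
    rw [intervalIntegral.integral_same, F4 x]
  -- main computation
  calc integ2 (fun p => g p * B p)
      = ∫ x in (0:ℝ)..(2 * π), ∫ y in (0:ℝ)..(2 * π), g (x, y) * B (x, y) := by
        unfold integ2
        exact fub (f := fun x y => g (x, y) * B (x, y)) (cg.mul cB) 0 (2 * π) 0 (2 * π)
    _ = ∫ x in (0:ℝ)..(2 * π), -∫ y in (0:ℝ)..(2 * π), pdx G (x, y) * χ (x, y) := by
        apply intervalIntegral.integral_congr
        intro x _
        show (∫ t in (0:ℝ)..(2 * π), g (x, t) * B (x, t))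
            = -∫ t in (0:ℝ)..(2 * π), pdx G (x, t) * χ (x, t)
        have hbound : g (x, 2 * π) * χ (x, 2 * π) = g (x, 0) * χ (x, 0) := by
          rw [per_y hg.2.2 x, F6 x]
        have hpart := parts (u := fun t => g (x, t)) (v := fun t => χ (x, t))
          (u' := fun t => pdy g (x, t)) (v' := fun t => B (x, t))
          (fun t => hasDerivAt_pdy hg.1 (x, t)) (fun t => F1 (x, t))
          (cont_slice_y cpdyg x) (cont_slice_y cB x) hbound
        have hpart2 : (∫ t in (0:ℝ)..(2 * π), g (x, t) * B (x, t))
            = -∫ t in (0:ℝ)..(2 * π), pdy g (x, t) * χ (x, t) := hpart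
        rw [hpart2]
        congr 1
        apply intervalIntegral.integral_congr
        intro t _
        show pdy g (x, t) * χ (x, t) = pdx G (x, t) * χ (x, t)
        rw [hGx (x, t)]
    _ = -∫ x in (0:ℝ)..(2 * π), ∫ y in (0:ℝ)..(2 * π), pdx G (x, y) * χ (x, y) :=
        intervalIntegral.integral_neg
    _ = -∫ y in (0:ℝ)..(2 * π), ∫ x in (0:ℝ)..(2 * π), pdx G (x, y) * χ (x, y) := by
        rw [← fub (f := fun x y => pdx G (x, y) * χ (x, y)) (cpdxG.mul cχ) 0 (2 * π) 0 (2 * π)]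
    _ = ∫ y in (0:ℝ)..(2 * π), ∫ x in (0:ℝ)..(2 * π), b (x, y) * G (x, y) := by
        have hy : ∀ y : ℝ, (∫ x in (0:ℝ)..(2 * π), pdx G (x, y) * χ (x, y))
            = -∫ x in (0:ℝ)..(2 * π), b (x, y) * G (x, y) := by
          intro y
          have hbound : G (2 * π, y) * χ (2 * π, y) = G (0, y) * χ (0, y) := by
            rw [per_x hG.2.1 y, F5 y]
          have hpart := parts (u := fun t => G (t, y)) (v := fun t => χ (t, y))
            (u' := fun t => pdx G (t, y)) (v' := fun t => b (t, y) - c)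
            (fun t => hasDerivAt_pdx hG.1 (t, y)) (fun t => F2 (t, y))
            (cont_slice_x cpdxG y) ((cont_slice_x cb y).sub continuous_const) hbound
          have hpart2 : (∫ x in (0:ℝ)..(2 * π), G (x, y) * (b (x, y) - c))
              = -∫ x in (0:ℝ)..(2 * π), pdx G (x, y) * χ (x, y) := hpart
          have hsplit : (∫ x in (0:ℝ)..(2 * π), G (x, y) * (b (x, y) - c))
              = ∫ x in (0:ℝ)..(2 * π), b (x, y) * G (x, y) := by
            have e1 : ∀ x : ℝ, G (x, y) * (b (x, y) - c)
                = b (x, y) * G (x, y) - c * G (x, y) := fun x => by ring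
            rw [intervalIntegral.integral_congr (fun x _ => e1 x),
              intervalIntegral.integral_sub
                (((cont_slice_x cb y).fun_mul (cont_slice_x cG y)).intervalIntegrable 0 (2 * π))
                ((continuous_const.fun_mul (cont_slice_x cG y)).intervalIntegrable 0 (2 * π)),
              intervalIntegral.integral_const_mul, hG0 y]
            ring
          linear_combination hpart2 - hsplit
        simp_rw [hy]
        rw [intervalIntegral.integral_neg, neg_neg]
    _ = integ2 (fun p => b p * G p) := rfl

end BKP

namespace BKP

lemma ibp2 {g a : F2} (hg : SmoothPer2 g) (ha : SmoothPer2 a) :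
    integ2 (fun p => g p * pdx (pdx a) p) = integ2 (fun p => a p * pdx (pdx g) p) := by
  unfold integ2
  have hy : ∀ y : ℝ, (∫ x in (0:ℝ)..(2 * π), g (x, y) * pdx (pdx a) (x, y))
      = ∫ x in (0:ℝ)..(2 * π), a (x, y) * pdx (pdx g) (x, y) := by
    intro y
    have h1 := parts (u := fun t => g (t, y)) (v := fun t => pdx a (t, y))
      (u' := fun t => pdx g (t, y)) (v' := fun t => pdx (pdx a) (t, y))
      (fun t => hasDerivAt_pdx hg.1 (t, y)) (fun t => hasDerivAt_pdx (contDiff_pdx ha.1) (t, y))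
      (cont_slice_x (contDiff_pdx hg.1).continuous y)
      (cont_slice_x (contDiff_pdx (contDiff_pdx ha.1)).continuous y)
      (show g (2 * π, y) * pdx a (2 * π, y) = g (0, y) * pdx a (0, y) by
        rw [per_x hg.2.1 y, pdx_per_x ha.2.1 y])
    have h1' : (∫ x in (0:ℝ)..(2 * π), g (x, y) * pdx (pdx a) (x, y))
        = -∫ x in (0:ℝ)..(2 * π), pdx g (x, y) * pdx a (x, y) := h1
    have h2 := parts (u := fun t => pdx g (t, y)) (v := fun t => a (t, y))
      (u' := fun t => pdx (pdx g) (t, y)) (v' := fun t => pdx a (t, y))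
      (fun t => hasDerivAt_pdx (contDiff_pdx hg.1) (t, y)) (fun t => hasDerivAt_pdx ha.1 (t, y))
      (cont_slice_x (contDiff_pdx (contDiff_pdx hg.1)).continuous y)
      (cont_slice_x (contDiff_pdx ha.1).continuous y)
      (show pdx g (2 * π, y) * a (2 * π, y) = pdx g (0, y) * a (0, y) by
        rw [pdx_per_x hg.2.1 y, per_x ha.2.1 y])
    have h2' : (∫ x in (0:ℝ)..(2 * π), pdx g (x, y) * pdx a (x, y))
        = -∫ x in (0:ℝ)..(2 * π), pdx (pdx g) (x, y) * a (x, y) := h2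
    have h3 : (∫ x in (0:ℝ)..(2 * π), pdx (pdx g) (x, y) * a (x, y))
        = ∫ x in (0:ℝ)..(2 * π), a (x, y) * pdx (pdx g) (x, y) :=
      intervalIntegral.integral_congr fun x _ => mul_comm _ _
    rw [h1', h2', h3, neg_neg]
  simp_rw [hy]

lemma pdx_add_smul {g a : F2} (hg : ContDiff ℝ ∞ g) (ha : ContDiff ℝ ∞ a) (c : ℂ) (p : ℝ × ℝ) :
    pdx (fun q => g q + c * a q) p = pdx g p + c * pdx a p :=
  ((hasDerivAt_pdx hg p).add ((hasDerivAt_pdx ha p).const_mul c)).deriv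

lemma pdx2_add_smul {g a : F2} (hg : ContDiff ℝ ∞ g) (ha : ContDiff ℝ ∞ a) (c : ℂ) (p : ℝ × ℝ) :
    pdx (pdx (fun q => g q + c * a q)) p = pdx (pdx g) p + c * pdx (pdx a) p := by
  have h : pdx (fun q => g q + c * a q) = fun q => pdx g q + c * pdx a q :=
    funext fun q => pdx_add_smul hg ha c q
  rw [h]
  exact pdx_add_smul (contDiff_pdx hg) (contDiff_pdx ha) c p

lemma deriv_eps (C0 C1 C2 : ℂ) :
    deriv (fun ε : ℝ => C0 + (ε : ℂ) * C1 + (ε : ℂ) * (ε : ℂ) * C2) 0 = C1 := by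
  have h1 : HasDerivAt (fun ε : ℝ => (ε : ℂ)) 1 0 := by
    simpa using (hasDerivAt_id (0:ℝ)).ofReal_comp
  have h := ((h1.mul_const C1).const_add C0).fun_add ((h1.fun_mul h1).mul_const C2)
  have h2 := h.deriv
  simpa using h2

end BKP

open BKP

/-- **The bi-Hamiltonian (BKP-type) Euler equation on `ĝ*`.** Assume `c₂ ≠ 0` and let
`G = ∂_x^{−1}g_y`, `V = ∂_x^{−1}v_y`. Then:
(i) the variational gradient of
`H(g,v) = ∫∫ g·(∂_x^{−1}v_y − (1/2)·∂_x^{−1}g_y + (c₁/(2c₂))·g_{xx}) dx dy` is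
`(δH/δv, δH/δg) = (G, V − G + (c₁/c₂)·g_{xx})`, in the sense that for any variation
`(a,b)` with `A = ∂_x^{−1}a_y`, `B = ∂_x^{−1}b_y`, the derivative at `ε = 0` of the
deformed Hamiltonian is `∫∫ [b·G + a·(V − G + (c₁/c₂)·g_{xx})]`;
(ii) the Euler vector field `âd*_{(G, V−G+(c₁/c₂)g_{xx})}(g,v)` is the stated pair; in
particular its first component is the integrable BKP-type equation
`g_t = g_x·∂_x^{−1}g_y − g_y·g + c₂·∂_x^{−1}g_{yy}` (equation (6) of the paper). -/
theorem biHamiltonian_BKP_euler_equation (c₁ c₂ : ℂ) (hc₂ : c₂ ≠ 0) (g v G V : F2)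
    (hg : SmoothPer2 g) (hv : SmoothPer2 v) (hG : SmoothPer2 G) (hV : SmoothPer2 V)
    (hGx : ∀ p, pdx G p = pdy g p) (hVx : ∀ p, pdx V p = pdy v p)
    (hG0 : ∀ y : ℝ, (∫ x in (0:ℝ)..(2 * π), G (x, y)) = 0)
    (hV0 : ∀ y : ℝ, (∫ x in (0:ℝ)..(2 * π), V (x, y)) = 0) :
    (∀ a b A B : F2, SmoothPer2 a → SmoothPer2 b → SmoothPer2 A → SmoothPer2 B →
      (∀ p, pdx A p = pdy a p) → (∀ p, pdx B p = pdy b p) →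
      (∀ y : ℝ, (∫ x in (0:ℝ)..(2 * π), A (x, y)) = 0) →
      (∀ y : ℝ, (∫ x in (0:ℝ)..(2 * π), B (x, y)) = 0) →
      deriv (fun ε : ℝ => integ2 (fun p =>
          (g p + (ε : ℂ) * a p) * ((V p + (ε : ℂ) * B p) - (1/2 : ℂ) * (G p + (ε : ℂ) * A p)
            + (c₁ / (2 * c₂)) * pdx (pdx (fun q => g q + (ε : ℂ) * a q)) p))) 0
        = integ2 (fun p => b p * G p
            + a p * (V p - G p + (c₁ / c₂) * pdx (pdx g) p))) ∧
    hatAd c₁ c₂ G (fun p => V p - G p + (c₁ / c₂) * pdx (pdx g) p) g v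
      = (fun p => G p * pdx g p - pdy g p * g p + c₂ * pdy G p,
         fun p => 2 * v p * pdy g p - pdy v p * g p + pdx v p * G p - 2 * pdx g p * V p
            + pdy g p * g p + 2 * pdx g p * G p
            - (c₁ / c₂) * (g p * pdx (pdx (pdx g)) p + 2 * pdx g p * pdx (pdx g) p)
            + 2 * c₁ * pdx (pdx (pdy g)) p + c₂ * (pdy V p - pdy G p)) := by
  constructor
  · intro a b A B ha hb hA hB hAx hBx hA0 hB0
    have ca := ha.1.continuous
    have cbb := hb.1.continuous
    have cA := hA.1.continuous
    have cB := hB.1.continuous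
    have cg := hg.1.continuous
    have cG := hG.1.continuous
    have cV := hV.1.continuous
    have cgxx := (contDiff_pdx (contDiff_pdx hg.1)).continuous
    have caxx := (contDiff_pdx (contDiff_pdx ha.1)).continuous
    have cW : Continuous (fun p : ℝ × ℝ => V p - (1/2 : ℂ) * G p
        + (c₁ / (2 * c₂)) * pdx (pdx g) p) :=
      (cV.sub (continuous_const.mul cG)).add (continuous_const.mul cgxx)
    have cR : Continuous (fun p : ℝ × ℝ => B p - (1/2 : ℂ) * A p
        + (c₁ / (2 * c₂)) * pdx (pdx a) p) :=
      (cB.sub (continuous_const.mul cA)).add (continuous_const.mul caxx)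
    have cP0 : Continuous (fun p : ℝ × ℝ => g p * (V p - (1/2 : ℂ) * G p
        + (c₁ / (2 * c₂)) * pdx (pdx g) p)) := cg.mul cW
    have cP1 : Continuous (fun p : ℝ × ℝ => a p * (V p - (1/2 : ℂ) * G p
        + (c₁ / (2 * c₂)) * pdx (pdx g) p) + g p * (B p - (1/2 : ℂ) * A p
        + (c₁ / (2 * c₂)) * pdx (pdx a) p)) := (ca.mul cW).add (cg.mul cR)
    have cP2 : Continuous (fun p : ℝ × ℝ => a p * (B p - (1/2 : ℂ) * A p
        + (c₁ / (2 * c₂)) * pdx (pdx a) p)) := ca.mul cR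
    have hfun : (fun ε : ℝ => integ2 (fun p =>
        (g p + (ε : ℂ) * a p) * ((V p + (ε : ℂ) * B p) - (1/2 : ℂ) * (G p + (ε : ℂ) * A p)
          + (c₁ / (2 * c₂)) * pdx (pdx (fun q => g q + (ε : ℂ) * a q)) p)))
        = fun ε : ℝ =>
          integ2 (fun p => g p * (V p - (1/2 : ℂ) * G p + (c₁ / (2 * c₂)) * pdx (pdx g) p))
          + (ε : ℂ) * integ2 (fun p => a p * (V p - (1/2 : ℂ) * G p
              + (c₁ / (2 * c₂)) * pdx (pdx g) p)
              + g p * (B p - (1/2 : ℂ) * A p + (c₁ / (2 * c₂)) * pdx (pdx a) p))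
          + (ε : ℂ) * (ε : ℂ) * integ2 (fun p => a p * (B p - (1/2 : ℂ) * A p
              + (c₁ / (2 * c₂)) * pdx (pdx a) p)) := by
      funext ε
      have step1 : integ2 (fun p =>
          (g p + (ε : ℂ) * a p) * ((V p + (ε : ℂ) * B p) - (1/2 : ℂ) * (G p + (ε : ℂ) * A p)
            + (c₁ / (2 * c₂)) * pdx (pdx (fun q => g q + (ε : ℂ) * a q)) p))
          = integ2 (fun p =>
            (g p * (V p - (1/2 : ℂ) * G p + (c₁ / (2 * c₂)) * pdx (pdx g) p)
            + (ε : ℂ) * (a p * (V p - (1/2 : ℂ) * G p + (c₁ / (2 * c₂)) * pdx (pdx g) p)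
              + g p * (B p - (1/2 : ℂ) * A p + (c₁ / (2 * c₂)) * pdx (pdx a) p)))
            + ((ε : ℂ) * (ε : ℂ)) * (a p * (B p - (1/2 : ℂ) * A p
              + (c₁ / (2 * c₂)) * pdx (pdx a) p))) :=
        integ2_congr fun p => by rw [pdx2_add_smul hg.1 ha.1 ((ε : ℂ)) p]; ring
      rw [step1, integ2_add (cP0.fun_add (continuous_const.fun_mul cP1))
          (continuous_const.fun_mul cP2),
        integ2_add cP0 (continuous_const.fun_mul cP1),
        integ2_const_mul, integ2_const_mul]
    rw [hfun, deriv_eps]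
    -- now show integ2 P1 = integ2 target
    have s1 : integ2 (fun p => g p * B p) = integ2 (fun p => b p * G p) :=
      swap_key hb hB hg hG hGx hBx hG0 hB0
    have s2 : integ2 (fun p => g p * A p) = integ2 (fun p => a p * G p) :=
      swap_key ha hA hg hG hGx hAx hG0 hA0
    have s3 : integ2 (fun p => g p * pdx (pdx a) p) = integ2 (fun p => a p * pdx (pdx g) p) :=
      ibp2 hg ha
    have ctgt : Continuous (fun p : ℝ × ℝ => b p * G p
        + a p * (V p - G p + (c₁ / c₂) * pdx (pdx g) p)) :=
      (cbb.mul cG).add (ca.mul ((cV.sub cG).add (continuous_const.mul cgxx)))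
    have hk2 : c₁ / (2 * c₂) + c₁ / (2 * c₂) = c₁ / c₂ := by
      field_simp
      ring
    have hdiff : integ2 (fun p => (a p * (V p - (1/2 : ℂ) * G p
          + (c₁ / (2 * c₂)) * pdx (pdx g) p)
          + g p * (B p - (1/2 : ℂ) * A p + (c₁ / (2 * c₂)) * pdx (pdx a) p))
        - (b p * G p + a p * (V p - G p + (c₁ / c₂) * pdx (pdx g) p)))
        = integ2 (fun p => a p * (V p - (1/2 : ℂ) * G p
          + (c₁ / (2 * c₂)) * pdx (pdx g) p)
          + g p * (B p - (1/2 : ℂ) * A p + (c₁ / (2 * c₂)) * pdx (pdx a) p))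
        - integ2 (fun p => b p * G p + a p * (V p - G p + (c₁ / c₂) * pdx (pdx g) p)) :=
      integ2_sub cP1 ctgt
    have h0 : integ2 (fun p => (a p * (V p - (1/2 : ℂ) * G p
          + (c₁ / (2 * c₂)) * pdx (pdx g) p)
          + g p * (B p - (1/2 : ℂ) * A p + (c₁ / (2 * c₂)) * pdx (pdx a) p))
        - (b p * G p + a p * (V p - G p + (c₁ / c₂) * pdx (pdx g) p))) = 0 := by
      have hpt : ∀ p : ℝ × ℝ, (a p * (V p - (1/2 : ℂ) * G p
            + (c₁ / (2 * c₂)) * pdx (pdx g) p)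
            + g p * (B p - (1/2 : ℂ) * A p + (c₁ / (2 * c₂)) * pdx (pdx a) p))
          - (b p * G p + a p * (V p - G p + (c₁ / c₂) * pdx (pdx g) p))
          = (g p * B p - b p * G p)
            + ((-(1/2 : ℂ)) * (g p * A p - a p * G p)
              + (c₁ / (2 * c₂)) * (g p * pdx (pdx a) p - a p * pdx (pdx g) p)) := fun p => by
        linear_combination (a p * pdx (pdx g) p) * hk2
      rw [integ2_congr hpt]
      have cD1 : Continuous (fun p : ℝ × ℝ => g p * B p - b p * G p) :=
        (cg.mul cB).sub (cbb.mul cG)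
      have cD2 : Continuous (fun p : ℝ × ℝ => (-(1/2 : ℂ)) * (g p * A p - a p * G p)) :=
        continuous_const.mul ((cg.mul cA).sub (ca.mul cG))
      have cD3 : Continuous (fun p : ℝ × ℝ => (c₁ / (2 * c₂))
          * (g p * pdx (pdx a) p - a p * pdx (pdx g) p)) :=
        continuous_const.mul ((cg.mul caxx).sub (ca.mul cgxx))
      rw [integ2_add cD1 (cD2.fun_add cD3), integ2_add cD2 cD3, integ2_const_mul,
        integ2_const_mul, integ2_sub (cg.fun_mul cB) (cbb.fun_mul cG),
        integ2_sub (cg.fun_mul cA) (ca.fun_mul cG), integ2_sub (cg.fun_mul caxx) (ca.fun_mul cgxx),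
        s1, s2, s3]
      ring
    rw [hdiff] at h0
    linear_combination h0
  · unfold hatAd
    have hcc : c₂ * (c₁ / c₂) = c₁ := by field_simp
    refine Prod.ext ?_ ?_
    · funext p
      show G p * pdx g p - pdx G p * g p + c₂ * pdy G p
          = G p * pdx g p - pdy g p * g p + c₂ * pdy G p
      rw [hGx p]
    · funext p
      have hu_x : pdx (fun q => V q - G q + c₁ / c₂ * pdx (pdx g) q) p
          = pdx V p - pdx G p + c₁ / c₂ * pdx (pdx (pdx g)) p :=
        (((hasDerivAt_pdx hV.1 p).sub (hasDerivAt_pdx hG.1 p)).add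
          ((hasDerivAt_pdx (contDiff_pdx (contDiff_pdx hg.1)) p).const_mul (c₁ / c₂))).deriv
      have hu_y : pdy (fun q => V q - G q + c₁ / c₂ * pdx (pdx g) q) p
          = pdy V p - pdy G p + c₁ / c₂ * pdy (pdx (pdx g)) p :=
        (((hasDerivAt_pdy hV.1 p).sub (hasDerivAt_pdy hG.1 p)).add
          ((hasDerivAt_pdy (contDiff_pdx (contDiff_pdx hg.1)) p).const_mul (c₁ / c₂))).deriv
      have hGxxx : pdx (pdx (pdx G)) p = pdx (pdx (pdy g)) p := by
        have hfunG : pdx G = pdy g := funext hGx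
        rw [hfunG]
      have hcomm : pdy (pdx (pdx g)) p = pdx (pdx (pdy g)) p := by
        have h1 : pdy (pdx (pdx g)) p = pdx (pdy (pdx g)) p :=
          (pdx_pdy_comm (contDiff_pdx hg.1) p).symm
        have h2 : pdy (pdx g) = pdx (pdy g) := funext fun q => (pdx_pdy_comm hg.1 q).symm
        rw [h1, h2]
      show G p * pdx v p + 2 * pdx G p * v p
          - pdx (fun q => V q - G q + c₁ / c₂ * pdx (pdx g) q) p * g p
          - 2 * (V p - G p + c₁ / c₂ * pdx (pdx g) p) * pdx g p
          + c₁ * pdx (pdx (pdx G)) p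
          + c₂ * pdy (fun q => V q - G q + c₁ / c₂ * pdx (pdx g) q) p
          = 2 * v p * pdy g p - pdy v p * g p + pdx v p * G p - 2 * pdx g p * V p
            + pdy g p * g p + 2 * pdx g p * G p
            - (c₁ / c₂) * (g p * pdx (pdx (pdx g)) p + 2 * pdx g p * pdx (pdx g) p)
            + 2 * c₁ * pdx (pdx (pdy g)) p + c₂ * (pdy V p - pdy G p)
      rw [hu_x, hu_y, hGxxx, hcomm, hGx p, hVx p]
      linear_combination (pdx (pdx (pdy g)) p) * hcc
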